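/- Let v ∈ (0, π) and a ∈ ℝ, a ≠ 0, satisfy a²·cos(v) + a·sin(v) ≥ 0. Then (3·sin(v) − v·cos(v))·a² + v·(2·sin(v) − v·cos(v))·a + (3·sin(v) − 3v·cos(v) − v²·sin(v)) ≥ 0. -/

import Mathlib

open Real

private lemma hderiv_g (x : ℝ) :
    HasDerivAt (fun t : ℝ => Real.sin t - t * Real.cos t) (x * Real.sin x) x := by
  have h := (Real.hasDerivAt_sin x).sub ((hasDerivAt_id x).mul (Real.hasDerivAt_cos x))
  refine h.congr_deriv ?_
  simp [id]

private lemma hderiv_f (x : ℝ) :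
    HasDerivAt (fun t : ℝ => 3 * Real.sin t - 3 * t * Real.cos t - t ^ 2 * Real.sin t)
      (x * (Real.sin x - x * Real.cos x)) x := by
  have h1 : HasDerivAt (fun t : ℝ => 3 * t * Real.cos t)
      (3 * Real.cos x + 3 * x * (-Real.sin x)) x := by
    have := (((hasDerivAt_id x).const_mul 3).mul (Real.hasDerivAt_cos x))
    refine this.congr_deriv ?_
    simp [id]
  have h2 : HasDerivAt (fun t : ℝ => t ^ 2 * Real.sin t)
      (2 * x * Real.sin x + x ^ 2 * Real.cos x) x := by
    have := ((hasDerivAt_pow 2 x).mul (Real.hasDerivAt_sin x))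
    refine this.congr_deriv ?_
    ring
  have h := (((Real.hasDerivAt_sin x).const_mul 3).sub h1).sub h2
  refine h.congr_deriv ?_
  ring

private lemma g_nonneg {v : ℝ} (h0 : 0 ≤ v) (hπ : v ≤ Real.pi) :
    0 ≤ Real.sin v - v * Real.cos v := by
  have mono : MonotoneOn (fun t : ℝ => Real.sin t - t * Real.cos t) (Set.Icc 0 Real.pi) := by
    apply monotoneOn_of_deriv_nonneg (convex_Icc 0 Real.pi)
    · exact (Real.continuous_sin.sub (continuous_id.mul Real.continuous_cos)).continuousOn
    · intro x hx
      exact (hderiv_g x).differentiableAt.differentiableWithinAt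
    · intro x hx
      rw [interior_Icc] at hx
      rw [(hderiv_g x).deriv]
      exact mul_nonneg hx.1.le (Real.sin_nonneg_of_nonneg_of_le_pi hx.1.le hx.2.le)
  have h := mono (Set.mem_Icc.mpr ⟨le_refl 0, Real.pi_pos.le⟩) (Set.mem_Icc.mpr ⟨h0, hπ⟩) h0
  simpa using h

private lemma f_nonneg {v : ℝ} (h0 : 0 ≤ v) (hπ : v ≤ Real.pi) :
    0 ≤ 3 * Real.sin v - 3 * v * Real.cos v - v ^ 2 * Real.sin v := by
  have mono : MonotoneOn (fun t : ℝ => 3 * Real.sin t - 3 * t * Real.cos t - t ^ 2 * Real.sin t)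
      (Set.Icc 0 Real.pi) := by
    apply monotoneOn_of_deriv_nonneg (convex_Icc 0 Real.pi)
    · exact ((continuous_const.mul Real.continuous_sin).sub
        ((continuous_const.mul continuous_id).mul Real.continuous_cos)).sub
        ((continuous_pow 2).mul Real.continuous_sin) |>.continuousOn
    · intro x hx
      exact (hderiv_f x).differentiableAt.differentiableWithinAt
    · intro x hx
      rw [interior_Icc] at hx
      rw [(hderiv_f x).deriv]
      exact mul_nonneg hx.1.le (g_nonneg hx.1.le hx.2.le)
  have h := mono (Set.mem_Icc.mpr ⟨le_refl 0, Real.pi_pos.le⟩) (Set.mem_Icc.mpr ⟨h0, hπ⟩) h0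
  simpa using h

theorem key_quadratic (v a : ℝ) (hv : v ∈ Set.Ioo 0 Real.pi) (ha : a ≠ 0)
    (hadm : a ^ 2 * Real.cos v + a * Real.sin v ≥ 0) :
    (3 * Real.sin v - v * Real.cos v) * a ^ 2
      + v * (2 * Real.sin v - v * Real.cos v) * a
      + (3 * Real.sin v - 3 * v * Real.cos v - v ^ 2 * Real.sin v) ≥ 0 := by
  obtain ⟨hv0, hvπ⟩ := hv
  set s := Real.sin v with hs_def
  set c := Real.cos v with hc_def
  have hs : 0 < s := Real.sin_pos_of_pos_of_lt_pi hv0 hvπ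
  have hg : 0 ≤ s - v * c := g_nonneg hv0.le hvπ.le
  have hf : 0 ≤ 3 * s - 3 * v * c - v ^ 2 * s := f_nonneg hv0.le hvπ.le
  rcases lt_or_gt_of_ne ha with hneg | hpos
  · -- a < 0 : constraint forces a*c + s ≤ 0, hence c > 0
    have hacs : a * c + s ≤ 0 := by
      by_contra h
      push_neg at h
      nlinarith [mul_pos (neg_pos.mpr hneg) h]
    have hc : 0 < c := by
      by_contra h
      push_neg at h
      nlinarith [mul_nonneg (neg_pos.mpr hneg).le (neg_nonneg.mpr h)]
    have hpyth : s ^ 2 + c ^ 2 = 1 := Real.sin_sq_add_cos_sq v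
    -- vertex inequality: 2*s*(3*s - v*c) - v*c*(2*s - v*c) ≥ 0 (SOS)
    have hvert : 0 ≤ 2 * s * (3 * s - v * c) - v * c * (2 * s - v * c) := by
      nlinarith [sq_nonneg (v * c - 2 * s), sq_nonneg s]
    -- second factor is ≤ 0
    have hfac : (3 * s - v * c) * (a * c - s) + v * (2 * s - v * c) * c ≤ 0 := by
      nlinarith [mul_nonneg (add_nonneg hg (by nlinarith : (0:ℝ) ≤ 2 * s)) hs.le]
    have hprod : 0 ≤ (a * c + s) * ((3 * s - v * c) * (a * c - s) + v * (2 * s - v * c) * c) := by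
      have := mul_nonneg (neg_nonneg.mpr hacs) (neg_nonneg.mpr hfac)
      nlinarith [this]
    -- c^2 * Q(a) = 3*(s - v*c) + (a*c+s)*((3s-vc)(ac-s) + v(2s-vc)c)
    have hkey : c ^ 2 * ((3 * s - v * c) * a ^ 2 + v * (2 * s - v * c) * a
        + (3 * s - 3 * v * c - v ^ 2 * s))
        = 3 * (s - v * c) * (s ^ 2 + c ^ 2)
          + (a * c + s) * ((3 * s - v * c) * (a * c - s) + v * (2 * s - v * c) * c) := by
      ring
    nlinarith [sq_nonneg c, mul_pos hc hc]
  · -- a > 0 : all coefficients nonneg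
    have hA : 0 ≤ 3 * s - v * c := by nlinarith
    have hB : 0 ≤ v * (2 * s - v * c) := by
      apply mul_nonneg hv0.le
      nlinarith
    nlinarith [mul_nonneg hA (sq_nonneg a), mul_nonneg hB hpos.le]
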